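/- For every fixed s ∈ ℂ, f_η(s) converges to e^{−s} as η → 0⁺; that is, the transfer function of the viscous transport system converges to the pure delay transfer function as the viscosity tends to zero. -/

import Mathlib

open Filter

/-- `λ₁(η,s) = (1 + √(1+4ηs))/(2η)`, principal branch of the complex square root. -/
noncomputable def lam1 (η : ℝ) (s : ℂ) : ℂ :=
  (1 + (1 + 4 * (η : ℂ) * s) ^ ((1 : ℂ) / 2)) / (2 * (η : ℂ))

/-- `λ₂(η,s) = (1 − √(1+4ηs))/(2η)`. -/
noncomputable def lam2 (η : ℝ) (s : ℂ) : ℂ :=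
  (1 - (1 + 4 * (η : ℂ) * s) ^ ((1 : ℂ) / 2)) / (2 * (η : ℂ))

/-- Transfer function of the viscous transport system. -/
noncomputable def f (η : ℝ) (s : ℂ) : ℂ :=
  (lam1 η s - lam2 η s) /
    (lam1 η s * Complex.exp (-(lam2 η s)) - lam2 η s * Complex.exp (-(lam1 η s)))

/-- The square root appearing in the eigenvalues. -/
noncomputable def wfun (s : ℂ) (η : ℝ) : ℂ := (1 + 4 * (η : ℂ) * s) ^ ((1 : ℂ) / 2)

lemma divHelperAux (a b c : ℂ) (hc : c ≠ 0) : (a / c) / (b / (2 * c)) = 2 * a / b := by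
  rcases eq_or_ne b 0 with hb | hb
  · simp [hb]
  · field_simp

theorem stmt_17 (s : ℂ) :
    Tendsto (fun η : ℝ => f η s) (nhdsWithin 0 (Set.Ioi 0))
      (nhds (Complex.exp (-s))) := by
  set l := nhdsWithin (0 : ℝ) (Set.Ioi 0) with hl
  -- base tends to 1
  have hbase : Tendsto (fun η : ℝ => (1 + 4 * (η : ℂ) * s)) l (nhds 1) := by
    have h : Continuous (fun η : ℝ => (1 + 4 * (η : ℂ) * s)) := by
      continuity
    have h2 := (h.tendsto 0).mono_left (nhdsWithin_le_nhds (s := Set.Ioi 0))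
    simpa using h2
  -- the square root tends to 1
  have hw : Tendsto (wfun s) l (nhds 1) := by
    have hc : ContinuousAt (fun z : ℂ => z ^ ((1 : ℂ) / 2)) 1 :=
      continuousAt_cpow_const Complex.one_mem_slitPlane
    have h2 := hc.tendsto.comp hbase
    rw [Complex.one_cpow] at h2
    exact h2
  have hη0 : ∀ᶠ η in l, (0 : ℝ) < η := eventually_mem_nhdsWithin
  have hz : ∀ᶠ η : ℝ in l, (1 + 4 * (η : ℂ) * s) ≠ 0 := hbase.eventually_ne one_ne_zero
  have hw1 : ∀ᶠ η in l, (1 : ℂ) + wfun s η ≠ 0 := by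
    have h : ∀ᶠ η in l, wfun s η ≠ -1 := hw.eventually_ne (show (1:ℂ) ≠ -1 by norm_num)
    filter_upwards [h] with η h hc
    exact h (by linear_combination hc)
  have hsq : ∀ᶠ η in l, wfun s η * wfun s η = 1 + 4 * (η : ℂ) * s := by
    filter_upwards [hz] with η h
    rw [wfun, ← Complex.cpow_add _ _ h]
    norm_num
  -- lam2 tends to -s
  have hlam2 : Tendsto (fun η => lam2 η s) l (nhds (-s)) := by
    have h2 : Tendsto (fun η => (-2 * s) / (1 + wfun s η)) l (nhds (-s)) := by
      have := Tendsto.div (tendsto_const_nhds (x := (-2 * s : ℂ)) (f := l))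
        (tendsto_const_nhds.add hw) (show (1:ℂ) + 1 ≠ 0 by norm_num)
      have heq : (-2 * s : ℂ) / (1 + 1) = -s := by ring_nf
      rwa [heq] at this
    refine h2.congr' ?_
    filter_upwards [hη0, hw1, hsq] with η hη h1 hsq
    have hηc : (η : ℂ) ≠ 0 := by exact_mod_cast ne_of_gt hη
    show (-2 * s) / (1 + wfun s η) = lam2 η s
    rw [lam2]
    show (-2 * s) / (1 + wfun s η) = (1 - wfun s η) / (2 * (η : ℂ))
    field_simp
    linear_combination hsq
  have hA : Tendsto (fun η => Complex.exp (-(lam2 η s))) l (nhds (Complex.exp s)) := by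
    have h2 := hlam2.neg
    rw [neg_neg] at h2
    exact (Complex.continuous_exp.tendsto s).comp h2
  -- exp(-lam1) tends to 0
  have hre : Tendsto (fun η => (wfun s η).re) l (nhds 1) := by
    have h2 := (Complex.continuous_re.tendsto 1).comp hw
    exact h2
  have hre1 : ∀ᶠ η in l, (1 : ℝ) ≤ 1 + (wfun s η).re := by
    have h := hre.eventually (eventually_ge_nhds (by norm_num : (0 : ℝ) < 1))
    filter_upwards [h] with η h
    linarith
  have hbound : Tendsto (fun η : ℝ => Real.exp (-(1 / (2 * η)))) l (nhds 0) := by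
    have h1 : Tendsto (fun η : ℝ => 1 / (2 * η)) l atTop := by
      have h0 : Tendsto (fun η : ℝ => (1 / 2 : ℝ) * η⁻¹) l atTop :=
        Tendsto.const_mul_atTop (by norm_num) tendsto_inv_nhdsGT_zero
      refine h0.congr fun x => ?_
      rw [one_div, one_div, mul_inv]
    exact Real.tendsto_exp_atBot.comp (tendsto_neg_atBot_iff.mpr h1)
  have hB : Tendsto (fun η => Complex.exp (-(lam1 η s))) l (nhds 0) := by
    refine squeeze_zero_norm' ?_ hbound
    filter_upwards [hη0, hre1] with η hη h1
    rw [Complex.norm_exp]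
    apply Real.exp_le_exp.mpr
    have : (-(lam1 η s)).re = -((1 + (wfun s η)).re / (2 * η)) := by
      rw [lam1, Complex.neg_re]
      congr 1
      rw [show (2 * (η : ℂ)) = ((2 * η : ℝ) : ℂ) by push_cast; ring, Complex.div_ofReal_re]
      rfl
    rw [this]
    have h2η : (0 : ℝ) < 2 * η := by linarith
    rw [Complex.add_re, Complex.one_re]
    gcongr
  -- main limit
  have hmain : Tendsto (fun η => 2 * wfun s η /
      ((1 + wfun s η) * Complex.exp (-(lam2 η s)) - (1 - wfun s η) * Complex.exp (-(lam1 η s))))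
      l (nhds (Complex.exp (-s))) := by
    have hnum : Tendsto (fun η => 2 * wfun s η) l (nhds 2) := by
      simpa using hw.const_mul 2
    have hden : Tendsto (fun η => (1 + wfun s η) * Complex.exp (-(lam2 η s)) -
        (1 - wfun s η) * Complex.exp (-(lam1 η s))) l (nhds (2 * Complex.exp s)) := by
      have h1 := ((tendsto_const_nhds (x := (1:ℂ)) (f := l)).add hw).mul hA
      have h2 := ((tendsto_const_nhds (x := (1:ℂ)) (f := l)).sub hw).mul hB
      have h3 := h1.sub h2
      have : (1 + 1) * Complex.exp s - (1 - 1) * 0 = 2 * Complex.exp s := by ring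
      rwa [this] at h3
    have h := hnum.div hden (by
      simp [Complex.exp_ne_zero])
    have hval : (2 : ℂ) / (2 * Complex.exp s) = Complex.exp (-s) := by
      rw [Complex.exp_neg]
      field_simp
    rwa [hval] at h
  refine hmain.congr' ?_
  filter_upwards [hη0] with η hη
  have hηc : (η : ℂ) ≠ 0 := by exact_mod_cast ne_of_gt hη
  set A := Complex.exp (-(lam2 η s)) with hAdef
  set B := Complex.exp (-(lam1 η s)) with hBdef
  have e1 : lam1 η s - lam2 η s = wfun s η / (η : ℂ) := by
    rw [lam1, lam2, wfun]
    field_simp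
    ring
  have e2 : lam1 η s * A - lam2 η s * B =
      ((1 + wfun s η) * A - (1 - wfun s η) * B) / (2 * (η : ℂ)) := by
    rw [lam1, lam2, wfun]
    field_simp
  show 2 * wfun s η / ((1 + wfun s η) * A - (1 - wfun s η) * B) = f η s
  rw [f, e1, e2]
  exact (divHelperAux _ _ _ hηc).symm
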